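/- Let F be a perfect field of characteristic 2 and 2 ≤ k ≤ n. Let π : V → V̄ be the linear map with π(e_i) = e_i for 1 ≤ i ≤ 2n and π(e_{2n+1}) = 0 (the quotient of V by the radical F·e_{2n+1} of the bilinearization of η, identified with V̄), and let ⋀^k π : ⋀^k V → ⋀^k V̄ be the induced map on k-th exterior powers. Then (⋀^k π)(W_k°) = W̄^sp_k and { w ∈ W_k° : (⋀^k π)(w) = 0 } = N̄_k. In particular W_k° / N̄_k ≅ W̄^sp_k. -/

import Mathlib

open ExteriorAlgebra

noncomputable section

def eta (F : Type) [Field F] (n : ℕ) (x : Fin (2 * n + 1) → F) : F :=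
  (∑ i : Fin n, x ⟨i.1, by have := i.2; omega⟩ * x ⟨n + i.1, by have := i.2; omega⟩)
    + x ⟨2 * n, by omega⟩ ^ 2

def zeta (F : Type) [Field F] (n : ℕ) (x y : Fin (2 * n) → F) : F :=
  ∑ i : Fin n, (x ⟨i.1, by have := i.2; omega⟩ * y ⟨n + i.1, by have := i.2; omega⟩
    - x ⟨n + i.1, by have := i.2; omega⟩ * y ⟨i.1, by have := i.2; omega⟩)

def eVec (F : Type) [Field F] (n : ℕ) : Fin (2 * n + 1) → F :=
  Pi.single (⟨2 * n, by omega⟩ : Fin (2 * n + 1)) 1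

def proj (F : Type) [Field F] (n : ℕ) : (Fin (2 * n + 1) → F) →ₗ[F] (Fin (2 * n) → F) :=
  LinearMap.funLeft F F (Fin.castLE (by omega))

variable {F : Type} [Field F] {n : ℕ}

/-- inclusion of F^{2n} into F^{2n+1} extending by 0. -/
def incl (F : Type) [Field F] (n : ℕ) : (Fin (2 * n) → F) →ₗ[F] (Fin (2 * n + 1) → F) where
  toFun x i := if h : (i : ℕ) < 2 * n then x ⟨i, h⟩ else 0
  map_add' x y := by funext i; by_cases h : (i : ℕ) < 2 * n <;> simp [h]
  map_smul' c x := by funext i; by_cases h : (i : ℕ) < 2 * n <;> simp [h]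

lemma proj_apply (x : Fin (2 * n + 1) → F) (i : Fin (2 * n)) :
    proj F n x i = x ⟨i.1, by omega⟩ := rfl

lemma incl_apply_lt (x : Fin (2 * n) → F) (i : Fin (2 * n + 1)) (h : (i : ℕ) < 2 * n) :
    incl F n x i = x ⟨i, h⟩ := by simp [incl, h]

lemma incl_apply_last (x : Fin (2 * n) → F) :
    incl F n x ⟨2 * n, by omega⟩ = 0 := by simp [incl]

lemma proj_incl (x : Fin (2 * n) → F) : proj F n (incl F n x) = x := by
  funext i
  rw [proj_apply, incl_apply_lt _ _ i.2]

lemma eVec_apply_lt (i : Fin (2 * n + 1)) (h : (i : ℕ) < 2 * n) : eVec F n i = 0 := by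
  have : i ≠ ⟨2 * n, by omega⟩ := by
    intro he; rw [he] at h; simp at h
  simp [eVec, Pi.single_eq_of_ne this]

lemma eVec_apply_last : eVec F n ⟨2 * n, by omega⟩ = 1 := by simp [eVec]

lemma proj_eVec : proj F n (eVec F n) = 0 := by
  funext i
  rw [proj_apply]
  exact eVec_apply_lt _ (by simpa using i.2)

lemma decomp (x : Fin (2 * n + 1) → F) :
    x = incl F n (proj F n x) + x ⟨2 * n, by omega⟩ • eVec F n := by
  funext i
  rcases lt_or_ge (i : ℕ) (2 * n) with h | h
  · simp [incl_apply_lt _ _ h, proj_apply, eVec_apply_lt _ h]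
  · have hi : i = ⟨2 * n, by omega⟩ := by
      have := i.2; exact Fin.ext (by simp; omega)
    rw [hi]
    simp [incl_apply_last, eVec_apply_last]


section Chunk2
variable {F : Type} [Field F] {n : ℕ}

lemma zeta_add_left (x x' y : Fin (2 * n) → F) :
    zeta F n (x + x') y = zeta F n x y + zeta F n x' y := by
  unfold zeta; rw [← Finset.sum_add_distrib]
  exact Finset.sum_congr rfl fun i _ => by simp only [Pi.add_apply]; ring

lemma zeta_smul_left (c : F) (x y : Fin (2 * n) → F) :
    zeta F n (c • x) y = c * zeta F n x y := by
  unfold zeta; rw [Finset.mul_sum]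
  exact Finset.sum_congr rfl fun i _ => by simp only [Pi.smul_apply, smul_eq_mul]; ring

lemma zeta_add_right (x y y' : Fin (2 * n) → F) :
    zeta F n x (y + y') = zeta F n x y + zeta F n x y' := by
  unfold zeta; rw [← Finset.sum_add_distrib]
  exact Finset.sum_congr rfl fun i _ => by simp only [Pi.add_apply]; ring

lemma zeta_smul_right (c : F) (x y : Fin (2 * n) → F) :
    zeta F n x (c • y) = c * zeta F n x y := by
  unfold zeta; rw [Finset.mul_sum]
  exact Finset.sum_congr rfl fun i _ => by simp only [Pi.smul_apply, smul_eq_mul]; ring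

/-- `zeta` as a bilinear map. -/
def zetaB (F : Type) [Field F] (n : ℕ) :
    (Fin (2 * n) → F) →ₗ[F] (Fin (2 * n) → F) →ₗ[F] F :=
  LinearMap.mk₂ F (zeta F n) zeta_add_left zeta_smul_left zeta_add_right zeta_smul_right

@[simp] lemma zetaB_apply (x y : Fin (2 * n) → F) : zetaB F n x y = zeta F n x y := rfl

lemma zeta_self (x : Fin (2 * n) → F) : zeta F n x x = 0 := by
  unfold zeta
  exact Finset.sum_eq_zero fun i _ => by ring

lemma zeta_antisymm (x y : Fin (2 * n) → F) : zeta F n x y = - zeta F n y x := by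
  unfold zeta; rw [← Finset.sum_neg_distrib]
  exact Finset.sum_congr rfl fun i _ => by ring

lemma eta_zero : eta F n (0 : Fin (2 * n + 1) → F) = 0 := by simp [eta]

lemma eta_smul (c : F) (x : Fin (2 * n + 1) → F) : eta F n (c • x) = c ^ 2 * eta F n x := by
  unfold eta
  simp only [Pi.smul_apply, smul_eq_mul]
  rw [mul_add, Finset.mul_sum]
  congr 1
  · exact Finset.sum_congr rfl fun i _ => by ring
  · ring

variable [CharP F 2]

lemma eta_add (x y : Fin (2 * n + 1) → F) :
    eta F n (x + y) = eta F n x + eta F n y + zeta F n (proj F n x) (proj F n y) := by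
  have h2 : (2 : F) = 0 := CharTwo.two_eq_zero
  unfold eta zeta
  simp only [Pi.add_apply, proj_apply]
  have hterm : ∀ i : Fin n,
      (x ⟨i.1, by have := i.2; omega⟩ + y ⟨i.1, by have := i.2; omega⟩) *
        (x ⟨n + i.1, by have := i.2; omega⟩ + y ⟨n + i.1, by have := i.2; omega⟩)
      = (x ⟨i.1, by have := i.2; omega⟩ * x ⟨n + i.1, by have := i.2; omega⟩
          + y ⟨i.1, by have := i.2; omega⟩ * y ⟨n + i.1, by have := i.2; omega⟩)
        + (x ⟨i.1, by have := i.2; omega⟩ * y ⟨n + i.1, by have := i.2; omega⟩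
          - x ⟨n + i.1, by have := i.2; omega⟩ * y ⟨i.1, by have := i.2; omega⟩) := by
    intro i
    linear_combination (x ⟨n + i.1, by have := i.2; omega⟩ * y ⟨i.1, by have := i.2; omega⟩) * h2
  rw [Finset.sum_congr rfl fun i _ => hterm i, Finset.sum_add_distrib, Finset.sum_add_distrib]
  have hsq : (x ⟨2 * n, by omega⟩ + y ⟨2 * n, by omega⟩) ^ 2
      = x ⟨2 * n, by omega⟩ ^ 2 + y ⟨2 * n, by omega⟩ ^ 2 := by
    linear_combination (x ⟨2 * n, by omega⟩ * y ⟨2 * n, by omega⟩) * h2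
  rw [hsq]
  ring

lemma zeta_proj_eq (x y : Fin (2 * n + 1) → F) :
    zeta F n (proj F n x) (proj F n y) = eta F n (x + y) - eta F n x - eta F n y := by
  rw [eta_add]; ring

lemma eta_eVec : eta F n (eVec F n) = 1 := by
  unfold eta
  rw [Finset.sum_eq_zero, eVec_apply_last]
  · ring
  · intro i _
    rw [eVec_apply_lt _ (by exact lt_of_lt_of_le i.2 (by omega))]
    ring

lemma eta_incl_add_smul (x : Fin (2 * n) → F) (c : F) :
    eta F n (incl F n x + c • eVec F n) = eta F n (incl F n x) + c ^ 2 := by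
  rw [eta_add, eta_smul, eta_eVec, map_smul, proj_eVec]
  have : zeta F n (proj F n (incl F n x)) (c • (0 : Fin (2 * n) → F)) = 0 := by
    rw [zeta_smul_right, ← zetaB_apply, map_zero, mul_zero]
  rw [this]
  ring

lemma zeta_incl (x y : Fin (2 * n) → F) :
    zeta F n x y = eta F n (incl F n x + incl F n y) - eta F n (incl F n x) - eta F n (incl F n y) := by
  rw [← zeta_proj_eq, proj_incl, proj_incl]

/-- η vanishes on the span of a family of pairwise "compatible" singular vectors. -/
lemma eta_zero_span {k : ℕ} (w : Fin k → (Fin (2 * n + 1) → F))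
    (h0 : ∀ i, eta F n (w i) = 0) (hij : ∀ i j, eta F n (w i + w j) = 0) :
    ∀ x ∈ Submodule.span F (Set.range w), eta F n x = 0 := by
  intro x hx
  rw [Submodule.mem_span_range_iff_exists_fun] at hx
  obtain ⟨c, rfl⟩ := hx
  have key : ∀ S : Finset (Fin k),
      eta F n (∑ i ∈ S, c i • w i) = 0 ∧
      ∀ j, zeta F n (proj F n (w j)) (proj F n (∑ i ∈ S, c i • w i)) = 0 := by
    intro S
    induction S using Finset.induction_on with
    | empty => simp [eta_zero, ← zetaB_apply]
    | insert a S ha IH =>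
      rw [Finset.sum_insert ha]
      constructor
      · rw [eta_add, eta_smul, h0, IH.1, map_smul, zeta_smul_left, IH.2 a]
        ring
      · intro j
        rw [map_add, zeta_add_right, map_smul, zeta_smul_right, IH.2 j]
        have hBa : zeta F n (proj F n (w j)) (proj F n (w a)) = 0 := by
          rw [zeta_proj_eq, hij, h0, h0]; ring
        rw [hBa]; ring
  exact (key Finset.univ).1
end Chunk2

end

noncomputable section
section Chunk3
variable {F : Type} [Field F] [CharP F 2] {M : Type} [AddCommGroup M] [Module F M]

lemma char2_add_self (K : Type) [Field K] [CharP K 2] {M' : Type} [AddCommGroup M']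
    [Module K M'] (x : M') : x + x = 0 := by
  rw [← two_smul K x, show (2 : K) = 0 from CharTwo.two_eq_zero, zero_smul]

lemma char2_neg_eq (K : Type) [Field K] [CharP K 2] {M' : Type} [AddCommGroup M']
    [Module K M'] (x : M') : -x = x :=
  neg_eq_of_add_eq_zero_left (char2_add_self K x)

lemma ιMulti_snoc {m : ℕ} (w : Fin m → M) (y : M) :
    ExteriorAlgebra.ιMulti F (m + 1) (Fin.snoc w y) =
      ExteriorAlgebra.ιMulti F m w * ExteriorAlgebra.ι F y := by
  rw [ExteriorAlgebra.ιMulti_apply, ExteriorAlgebra.ιMulti_apply, List.ofFn_succ']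
  simp only [Fin.snoc_castSucc, Fin.snoc_last, List.concat_eq_append, List.prod_append,
    List.prod_cons, List.prod_nil, mul_one]

lemma ιMulti_update {m : ℕ} (f : Fin (m + 1) → M) (i : Fin (m + 1)) (e : M) :
    ExteriorAlgebra.ιMulti F (m + 1) (Function.update f i e) =
      ExteriorAlgebra.ιMulti F m (f ∘ i.succAbove) * ExteriorAlgebra.ι F e := by
  classical
  set σ : Equiv.Perm (Fin (m + 1)) :=
    (finSuccEquiv' i).trans (finSuccEquiv' (Fin.last m)).symm with hσ
  have hcomp : (Fin.snoc (f ∘ i.succAbove) e : Fin (m + 1) → M) ∘ σ = Function.update f i e := by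
    funext x
    rcases eq_or_ne x i with rfl | hx
    · have : σ x = Fin.last m := by
        simp [hσ, Equiv.trans_apply, finSuccEquiv'_at, finSuccEquiv'_symm_none]
      simp [Function.comp, this, Fin.snoc_last, Function.update_self]
    · obtain ⟨j, rfl⟩ := Fin.exists_succAbove_eq hx
      have : σ (i.succAbove j) = Fin.castSucc j := by
        simp [hσ, Equiv.trans_apply, finSuccEquiv'_succAbove, finSuccEquiv'_symm_some,
          Fin.succAbove_last]
      simp [Function.comp, this, Fin.snoc_castSucc, Function.update_of_ne hx]
  have hperm := (ExteriorAlgebra.ιMulti F (m + 1)).map_perm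
    (Fin.snoc (f ∘ i.succAbove) e : Fin (m + 1) → M) σ
  rw [hcomp] at hperm
  rw [hperm, ← ιMulti_snoc (f ∘ i.succAbove) e]
  rcases Int.units_eq_one_or (Equiv.Perm.sign σ) with h | h
  · rw [h, one_smul]
  · rw [h, Units.smul_def]
    push_cast
    rw [neg_one_zsmul, char2_neg_eq F]

lemma ιMulti_expand_aux {m : ℕ} (c : Fin m → F) (e : M) :
    ∀ (S : Finset (Fin m)) (f : Fin m → M),
      ExteriorAlgebra.ιMulti F m (S.piecewise (fun i => f i + c i • e) f)
        = ExteriorAlgebra.ιMulti F m f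
          + ∑ i ∈ S, c i • ExteriorAlgebra.ιMulti F m (Function.update f i e) := by
  classical
  intro S
  induction S using Finset.induction_on with
  | empty => intro f; simp
  | insert a S ha IH =>
    intro f
    rw [Finset.piecewise_insert]
    set P := S.piecewise (fun i => f i + c i • e) f with hP
    have h1 : ExteriorAlgebra.ιMulti F m (Function.update P a (f a + c a • e))
        = ExteriorAlgebra.ιMulti F m (Function.update P a (f a))
          + c a • ExteriorAlgebra.ιMulti F m (Function.update P a e) := by
      rw [AlternatingMap.map_update_add, AlternatingMap.map_update_smul]
    have hPa : P a = f a := Finset.piecewise_eq_of_notMem _ _ _ ha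
    have h2 : Function.update P a (f a) = P := by
      rw [← hPa, Function.update_eq_self]
    have h3 : Function.update P a e
        = S.piecewise (fun i => (Function.update f a e) i + c i • e) (Function.update f a e) := by
      funext x
      by_cases hxS : x ∈ S
      · have hxa : x ≠ a := fun hxa => ha (hxa ▸ hxS)
        rw [Function.update_of_ne hxa, hP, Finset.piecewise_eq_of_mem _ _ _ hxS,
          Finset.piecewise_eq_of_mem _ _ _ hxS, Function.update_of_ne hxa]
      · rcases eq_or_ne x a with rfl | hxa
        · rw [Function.update_self, Finset.piecewise_eq_of_notMem _ _ _ hxS,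
            Function.update_self]
        · rw [Function.update_of_ne hxa, hP, Finset.piecewise_eq_of_notMem _ _ _ hxS,
            Finset.piecewise_eq_of_notMem _ _ _ hxS, Function.update_of_ne hxa]
    have h4 : ExteriorAlgebra.ιMulti F m (Function.update P a e)
        = ExteriorAlgebra.ιMulti F m (Function.update f a e) := by
      rw [h3, IH]
      rw [Finset.sum_eq_zero, add_zero]
      intro i hiS
      have hia : i ≠ a := fun hia => ha (hia ▸ hiS)
      have : Function.update (Function.update f a e) i e i
          = Function.update (Function.update f a e) i e a := by
        rw [Function.update_self, Function.update_of_ne (Ne.symm hia), Function.update_self]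
      rw [AlternatingMap.map_eq_zero_of_eq _ _ this hia, smul_zero]
    rw [h1, h2, h4, IH, Finset.sum_insert ha]
    abel
  
lemma ιMulti_expand {m : ℕ} (f : Fin m → M) (c : Fin m → F) (e : M) :
    ExteriorAlgebra.ιMulti F m (fun i => f i + c i • e)
      = ExteriorAlgebra.ιMulti F m f
        + ∑ i, c i • ExteriorAlgebra.ιMulti F m (Function.update f i e) := by
  classical
  have := ιMulti_expand_aux c e Finset.univ f
  rwa [Finset.piecewise_univ] at this

end Chunk3

end

noncomputable section
section Chunk4
variable {F : Type} [Field F] [CharP F 2] {n : ℕ}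

lemma li_proj {k : ℕ} (v : Fin k → (Fin (2 * n + 1) → F))
    (hsing : ∀ x ∈ Submodule.span F (Set.range v), eta F n x = 0)
    (hLI : LinearIndependent F v) : LinearIndependent F (proj F n ∘ v) := by
  rw [Fintype.linearIndependent_iff] at hLI ⊢
  intro g hg
  set y := ∑ i, g i • v i with hy
  have hyspan : y ∈ Submodule.span F (Set.range v) :=
    Submodule.sum_mem _ fun i _ => Submodule.smul_mem _ _ (Submodule.subset_span ⟨i, rfl⟩)
  have hpy : proj F n y = 0 := by
    rw [hy, map_sum]
    simpa [Function.comp] using hg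
  have hye : y = y ⟨2 * n, by omega⟩ • eVec F n := by
    conv_lhs => rw [decomp y]
    rw [hpy, map_zero, zero_add]
  have hetay : eta F n y = 0 := hsing y hyspan
  have hc : y ⟨2 * n, by omega⟩ = 0 := by
    rw [hye, eta_smul, eta_eVec, mul_one] at hetay
    exact pow_eq_zero_iff (by norm_num) |>.1 hetay
  have hy0 : y = 0 := by rw [hye, hc, zero_smul]
  exact hLI g (hy0 ▸ hy.symm)

lemma zeta_nondeg (w : Fin (2 * n) → F) (h : ∀ z, zeta F n z w = 0) : w = 0 := by
  classical
  funext t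
  have ht2 := t.2
  rcases lt_or_ge (t : ℕ) n with h1 | h1
  · set z : Fin (2 * n) → F :=
      fun j => if j = (⟨n + (t : ℕ), by omega⟩ : Fin (2 * n)) then 1 else 0 with hzd
    have hz := h z
    unfold zeta at hz
    rw [Finset.sum_eq_single_of_mem (⟨(t : ℕ), h1⟩ : Fin n) (Finset.mem_univ _)] at hz
    · simp only [hzd] at hz
      rw [if_neg (by simp only [Fin.mk.injEq]; omega),
        if_pos (by simp only [Fin.mk.injEq])] at hz
      have hw : w ⟨(t : ℕ), by omega⟩ = 0 := by linear_combination -hz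
      have heq : (⟨(t : ℕ), by omega⟩ : Fin (2 * n)) = t := Fin.ext rfl
      rwa [heq] at hw
    · intro i _ hne
      have hvi : (i : ℕ) ≠ (t : ℕ) := fun hh => hne (Fin.ext hh)
      have hi2 := i.2
      simp only [hzd]
      rw [if_neg (by simp only [Fin.mk.injEq]; omega),
        if_neg (by simp only [Fin.mk.injEq]; omega)]
      ring
  · have ht' : (t : ℕ) - n < n := by omega
    set z : Fin (2 * n) → F :=
      fun j => if j = (⟨(t : ℕ) - n, by omega⟩ : Fin (2 * n)) then 1 else 0 with hzd
    have hz := h z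
    unfold zeta at hz
    rw [Finset.sum_eq_single_of_mem (⟨(t : ℕ) - n, ht'⟩ : Fin n) (Finset.mem_univ _)] at hz
    · simp only [hzd] at hz
      rw [if_pos (by simp only [Fin.mk.injEq]),
        if_neg (by simp only [Fin.mk.injEq]; omega)] at hz
      have hw : w ⟨n + ((t : ℕ) - n), by omega⟩ = 0 := by linear_combination hz
      have heq : (⟨n + ((t : ℕ) - n), by omega⟩ : Fin (2 * n)) = t :=
        Fin.ext (by show n + ((t : ℕ) - n) = (t : ℕ); omega)
      rwa [heq] at hw
    · intro i _ hne
      have hvi : (i : ℕ) ≠ (t : ℕ) - n := fun hh => hne (Fin.ext hh)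
      have hi2 := i.2
      simp only [hzd]
      rw [if_neg (by simp only [Fin.mk.injEq]; omega),
        if_neg (by simp only [Fin.mk.injEq]; omega)]
      ring

lemma zeta_span_left {m : ℕ} (xb : Fin m → (Fin (2 * n) → F)) (ub : Fin (2 * n) → F)
    (h : ∀ i, zeta F n (xb i) ub = 0) :
    ∀ z ∈ Submodule.span F (Set.range xb), zeta F n z ub = 0 := by
  intro z hz
  rw [Submodule.mem_span_range_iff_exists_fun] at hz
  obtain ⟨c, rfl⟩ := hz
  have : ((zetaB F n).flip ub) (∑ i, c i • xb i) = ∑ i, c i • ((zetaB F n).flip ub) (xb i) := by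
    rw [map_sum]
    exact Finset.sum_congr rfl fun i _ => by rw [map_smul]
  simp only [LinearMap.flip_apply, zetaB_apply] at this
  rw [this]
  simp [h]

lemma exists_hyp {m : ℕ} (hm : m < n) (xb : Fin m → (Fin (2 * n) → F))
    (hLI : LinearIndependent F xb) (hiso : ∀ i j, zeta F n (xb i) (xb j) = 0) :
    ∃ ub ub', (∀ i, zeta F n ub (xb i) = 0) ∧ (∀ i, zeta F n ub' (xb i) = 0) ∧
      zeta F n ub' ub = 1 ∧ ub ∉ Submodule.span F (Set.range xb) := by
  classical
  set Ψ : (Fin (2 * n) → F) →ₗ[F] (Fin m → F) :=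
    LinearMap.pi (fun i => (zetaB F n).flip (xb i)) with hΨ
  set P := LinearMap.ker Ψ with hPdef
  have hmemP : ∀ z, z ∈ P ↔ ∀ i, zeta F n z (xb i) = 0 := by
    intro z
    rw [hPdef, LinearMap.mem_ker, hΨ]
    constructor
    · intro hz i
      have := congrFun hz i
      simpa [LinearMap.pi_apply] using this
    · intro hz
      funext i
      simpa [LinearMap.pi_apply] using hz i
  have hXP : Submodule.span F (Set.range xb) ≤ P := by
    rw [Submodule.span_le]
    rintro _ ⟨j, rfl⟩
    rw [SetLike.mem_coe, hmemP]
    exact hiso j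
  have h1 : Module.finrank F (LinearMap.range Ψ) + Module.finrank F P = 2 * n := by
    rw [LinearMap.finrank_range_add_finrank_ker, Module.finrank_fin_fun]
  have h2 : Module.finrank F (LinearMap.range Ψ) ≤ m := by
    have := Submodule.finrank_le (LinearMap.range Ψ)
    rwa [Module.finrank_fin_fun] at this
  have hX : Module.finrank F (Submodule.span F (Set.range xb)) = m := by
    rw [finrank_span_eq_card hLI, Fintype.card_fin]
  have hne : ¬(P ≤ Submodule.span F (Set.range xb)) := by
    intro hle
    have := Submodule.finrank_mono hle
    omega
  obtain ⟨ub, hubP, hubX⟩ := SetLike.not_le_iff_exists.1 hne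
  by_cases hcase : ∃ w ∈ P, zeta F n w ub ≠ 0
  · obtain ⟨w, hwP, hwz⟩ := hcase
    refine ⟨ub, (zeta F n w ub)⁻¹ • w, (hmemP ub).1 hubP, ?_, ?_, hubX⟩
    · intro i
      rw [zeta_smul_left, (hmemP w).1 hwP i, mul_zero]
    · rw [zeta_smul_left, inv_mul_cancel₀ hwz]
  · exfalso
    push_neg at hcase
    have hker : (⨅ i, LinearMap.ker ((zetaB F n).flip (xb i))) ≤
        LinearMap.ker ((zetaB F n).flip ub) := by
      rw [← LinearMap.ker_pi]
      intro w hw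
      rw [LinearMap.mem_ker]
      exact hcase w hw
    have hmem := mem_span_of_iInf_ker_le_ker hker
    rw [Submodule.mem_span_range_iff_exists_fun] at hmem
    obtain ⟨c, hc⟩ := hmem
    have hcc : (zetaB F n).flip (∑ i, c i • xb i) = (zetaB F n).flip ub := by
      rw [map_sum, ← hc]
      exact Finset.sum_congr rfl fun i _ => by rw [map_smul]
    have hzero : ∀ z, zeta F n z (ub - ∑ i, c i • xb i) = 0 := by
      intro z
      have : (zetaB F n).flip (ub - ∑ i, c i • xb i) = 0 := by
        rw [map_sub, hcc, sub_self]
      have h6 : zeta F n z (ub - ∑ i, c i • xb i)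
          = ((zetaB F n).flip (ub - ∑ i, c i • xb i)) z := rfl
      rw [h6, this]
      simp
    have := zeta_nondeg _ hzero
    have hub : ub = ∑ i, c i • xb i := by
      have := sub_eq_zero.1 this
      exact this
    apply hubX
    rw [hub]
    exact Submodule.sum_mem _ fun i _ =>
      Submodule.smul_mem _ _ (Submodule.subset_span ⟨i, rfl⟩)
end Chunk4

end

noncomputable section
def Wcirc (F : Type) [Field F] (n k : ℕ) :
    Submodule F (ExteriorAlgebra F (Fin (2 * n + 1) → F)) :=
  Submodule.span F {w | ∃ v : Fin k → (Fin (2 * n + 1) → F),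
    LinearIndependent F v ∧
    (∀ x ∈ Submodule.span F (Set.range v), eta F n x = 0) ∧
    w = ExteriorAlgebra.ιMulti F k v}

def Wsp (F : Type) [Field F] (n j : ℕ) :
    Submodule F (ExteriorAlgebra F (Fin (2 * n) → F)) :=
  Submodule.span F {w | ∃ v : Fin j → (Fin (2 * n) → F),
    LinearIndependent F v ∧
    (∀ x ∈ Submodule.span F (Set.range v), ∀ y ∈ Submodule.span F (Set.range v),
      zeta F n x y = 0) ∧
    w = ExteriorAlgebra.ιMulti F j v}

def Nbar (F : Type) [Field F] (n k : ℕ) :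
    Submodule F (ExteriorAlgebra F (Fin (2 * n + 1) → F)) :=
  Submodule.span F {w | ∃ v : Fin (k - 1) → (Fin (2 * n + 1) → F),
    LinearIndependent F v ∧
    (∀ x ∈ Submodule.span F (Set.range v), eta F n x = 0) ∧
    w = ExteriorAlgebra.ιMulti F (k - 1) v * ExteriorAlgebra.ι F (eVec F n)}

section Chunk5
variable {F : Type} [Field F] [CharP F 2] {n : ℕ}

lemma zeta_zero_right (z : Fin (2 * n) → F) : zeta F n z 0 = 0 := by
  rw [← zetaB_apply, map_zero]

lemma zeta_comm (x y : Fin (2 * n) → F) : zeta F n x y = zeta F n y x := by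
  rw [zeta_antisymm, CharTwo.neg_eq]

lemma span_proj_eq {k : ℕ} (v : Fin k → (Fin (2 * n + 1) → F)) :
    Submodule.span F (Set.range (proj F n ∘ v))
      = Submodule.map (proj F n) (Submodule.span F (Set.range v)) := by
  rw [Submodule.map_span, Set.range_comp]

lemma iso_of_sing {k : ℕ} (v : Fin k → (Fin (2 * n + 1) → F))
    (hsing : ∀ x ∈ Submodule.span F (Set.range v), eta F n x = 0) :
    ∀ x ∈ Submodule.span F (Set.range (proj F n ∘ v)),
      ∀ y ∈ Submodule.span F (Set.range (proj F n ∘ v)), zeta F n x y = 0 := by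
  intro x hx y hy
  rw [span_proj_eq, Submodule.mem_map] at hx hy
  obtain ⟨a, ha, rfl⟩ := hx
  obtain ⟨b, hb, rfl⟩ := hy
  rw [zeta_proj_eq, hsing a ha, hsing b hb, hsing (a + b) (Submodule.add_mem _ ha hb)]
  ring

lemma wcirc_map_le {k : ℕ} :
    Submodule.map (ExteriorAlgebra.map (proj F n)).toLinearMap (Wcirc F n k) ≤ Wsp F n k := by
  rw [Wcirc, Submodule.map_span, Submodule.span_le]
  rintro _ ⟨w, ⟨v, hLI, hsing, rfl⟩, rfl⟩
  apply Submodule.subset_span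
  exact ⟨proj F n ∘ v, li_proj v hsing hLI, iso_of_sing v hsing, by
    simp [AlgHom.toLinearMap_apply]⟩

lemma sqrt_exists (a : F) [PerfectField F] : ∃ s : F, s ^ 2 = a := by
  haveI : ExpChar F 2 := ExpChar.prime Nat.prime_two
  obtain ⟨s, hs⟩ := surjective_frobenius F 2 a
  exact ⟨s, by rwa [frobenius_def] at hs⟩

lemma wsp_le_map [PerfectField F] {k : ℕ} :
    Wsp F n k ≤ Submodule.map (ExteriorAlgebra.map (proj F n)).toLinearMap (Wcirc F n k) := by
  rw [Wsp, Submodule.span_le]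
  rintro _ ⟨vb, hLI, hiso, rfl⟩
  choose s hs using fun i => sqrt_exists (F := F) (eta F n (incl F n (vb i)))
  set u : Fin k → (Fin (2 * n + 1) → F) :=
    fun i => incl F n (vb i) + s i • eVec F n with hu
  have hproju : proj F n ∘ u = vb := by
    funext i
    simp only [hu, Function.comp_apply, map_add, map_smul, proj_incl, proj_eVec, smul_zero,
      add_zero]
  have hLIu : LinearIndependent F u :=
    LinearIndependent.of_comp (proj F n) (by rw [hproju]; exact hLI)
  have hetau : ∀ i, eta F n (u i) = 0 := by
    intro i
    rw [hu]
    simp only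
    rw [eta_incl_add_smul, hs i, CharTwo.add_self_eq_zero]
  have hsingu : ∀ x ∈ Submodule.span F (Set.range u), eta F n x = 0 := by
    apply eta_zero_span u hetau
    intro i j
    rw [eta_add, hetau, hetau]
    have hpi : proj F n (u i) = vb i := congrFun hproju i
    have hpj : proj F n (u j) = vb j := congrFun hproju j
    rw [hpi, hpj, hiso (vb i) (Submodule.subset_span ⟨i, rfl⟩) (vb j)
      (Submodule.subset_span ⟨j, rfl⟩)]
    ring
  refine Submodule.mem_map.2 ⟨ExteriorAlgebra.ιMulti F k u,
    Submodule.subset_span ⟨u, hLIu, hsingu, rfl⟩, ?_⟩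
  simp only [AlgHom.toLinearMap_apply, ExteriorAlgebra.map_apply_ιMulti]
  rw [hproju]

lemma nbar_le_ker {k : ℕ} :
    Nbar F n k ≤ LinearMap.ker (ExteriorAlgebra.map (proj F n)).toLinearMap := by
  rw [Nbar, Submodule.span_le]
  rintro _ ⟨x, hLI, hsing, rfl⟩
  rw [SetLike.mem_coe, LinearMap.mem_ker, AlgHom.toLinearMap_apply, map_mul,
    ExteriorAlgebra.map_apply_ι, proj_eVec, map_zero, mul_zero]

lemma nbar_le_wcirc [PerfectField F] {m : ℕ} (hm : m < n) :
    Nbar F n (m + 1) ≤ Wcirc F n (m + 1) := by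
  rw [Nbar, Submodule.span_le]
  rintro _ ⟨x, hLI, hsing, rfl⟩
  set xb : Fin m → (Fin (2 * n) → F) := proj F n ∘ x with hxb
  have hLIb : LinearIndependent F xb := li_proj x hsing hLI
  have hisob : ∀ i j, zeta F n (xb i) (xb j) = 0 := by
    intro i j
    rw [hxb]
    simp only [Function.comp_apply]
    rw [zeta_proj_eq, hsing (x i) (Submodule.subset_span ⟨i, rfl⟩),
      hsing (x j) (Submodule.subset_span ⟨j, rfl⟩),
      hsing (x i + x j) (Submodule.add_mem _ (Submodule.subset_span ⟨i, rfl⟩)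
        (Submodule.subset_span ⟨j, rfl⟩))]
    ring
  obtain ⟨ub, ub', h1, h2, h3, h4⟩ := exists_hyp hm xb hLIb hisob
  obtain ⟨su, hsu⟩ := sqrt_exists (F := F) (eta F n (incl F n ub))
  obtain ⟨su', hsu'⟩ := sqrt_exists (F := F) (eta F n (incl F n ub'))
  set u : Fin (2 * n + 1) → F := incl F n ub + su • eVec F n with hud
  set u' : Fin (2 * n + 1) → F := incl F n ub' + su' • eVec F n with hud'
  set v1 : Fin (2 * n + 1) → F := u + u' + eVec F n with hv1d
  have hpu : proj F n u = ub := by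
    rw [hud, map_add, map_smul, proj_incl, proj_eVec, smul_zero, add_zero]
  have hpu' : proj F n u' = ub' := by
    rw [hud', map_add, map_smul, proj_incl, proj_eVec, smul_zero, add_zero]
  have hpv1 : proj F n v1 = ub + ub' := by
    rw [hv1d, map_add, map_add, hpu, hpu', proj_eVec, add_zero]
  have hetau : eta F n u = 0 := by
    rw [hud, eta_incl_add_smul, hsu, CharTwo.add_self_eq_zero]
  have hetau' : eta F n u' = 0 := by
    rw [hud', eta_incl_add_smul, hsu', CharTwo.add_self_eq_zero]
  have hzuu' : zeta F n ub ub' = 1 := by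
    rw [zeta_comm, h3]
  have hetav1 : eta F n v1 = 0 := by
    rw [hv1d, eta_add, eta_add, hetau, hetau', hpu, hpu', hzuu', eta_eVec, proj_eVec,
      zeta_zero_right]
    have : (0 : F) + 0 + 1 + 1 + 0 = 1 + 1 := by ring
    rw [this, CharTwo.add_self_eq_zero]
  -- the zeta facts for span arguments
  have hxbu : ∀ i, zeta F n (xb i) ub = 0 := fun i => by rw [zeta_comm]; exact h1 i
  have hxbu' : ∀ i, zeta F n (xb i) ub' = 0 := fun i => by rw [zeta_comm]; exact h2 i
  -- generic snoc generator lemma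
  have snoc_mem : ∀ w : Fin (2 * n + 1) → F, eta F n w = 0 →
      (∀ i, zeta F n (xb i) (proj F n w) = 0) →
      proj F n w ∉ Submodule.span F (Set.range xb) →
      ExteriorAlgebra.ιMulti F (m + 1) (Fin.snoc x w) ∈ Wcirc F n (m + 1) := by
    intro w hw0 hwx hwnot
    apply Submodule.subset_span
    refine ⟨Fin.snoc x w, ?_, ?_, rfl⟩
    · rw [linearIndependent_fin_snoc]
      refine ⟨hLI, fun hmem => hwnot ?_⟩
      rw [hxb, span_proj_eq]
      exact Submodule.mem_map_of_mem hmem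
    · apply eta_zero_span
      · intro i
        refine Fin.lastCases ?_ ?_ i
        · rw [Fin.snoc_last]; exact hw0
        · intro j
          rw [Fin.snoc_castSucc]
          exact hsing (x j) (Submodule.subset_span ⟨j, rfl⟩)
      · intro i j
        have key : ∀ a b : Fin (2 * n + 1) → F, eta F n a = 0 → eta F n b = 0 →
            zeta F n (proj F n a) (proj F n b) = 0 → eta F n (a + b) = 0 := by
          intro a b ha hb hz
          rw [eta_add, ha, hb, hz]; ring
        have hz0 : ∀ p q : Fin (m + 1),
            zeta F n (proj F n ((Fin.snoc x w : Fin (m + 1) → (Fin (2 * n + 1) → F)) p))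
              (proj F n ((Fin.snoc x w : Fin (m + 1) → (Fin (2 * n + 1) → F)) q)) = 0 := by
          intro p q
          refine Fin.lastCases ?_ ?_ p
          · refine Fin.lastCases ?_ ?_ q
            · rw [Fin.snoc_last, zeta_self]
            · intro j
              rw [Fin.snoc_last, Fin.snoc_castSucc, zeta_comm]
              exact hwx j
          · intro i'
            refine Fin.lastCases ?_ ?_ q
            · rw [Fin.snoc_last, Fin.snoc_castSucc]
              exact hwx i'
            · intro j'
              rw [Fin.snoc_castSucc, Fin.snoc_castSucc]
              exact hisob i' j'
        have h0' : ∀ p : Fin (m + 1),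
            eta F n ((Fin.snoc x w : Fin (m + 1) → (Fin (2 * n + 1) → F)) p) = 0 := by
          intro p
          refine Fin.lastCases ?_ ?_ p
          · rw [Fin.snoc_last]; exact hw0
          · intro j
            rw [Fin.snoc_castSucc]
            exact hsing (x j) (Submodule.subset_span ⟨j, rfl⟩)
        exact key _ _ (h0' i) (h0' j) (hz0 i j)
  -- memberships of the three pieces
  have hmemu : ExteriorAlgebra.ιMulti F (m + 1) (Fin.snoc x u) ∈ Wcirc F n (m + 1) := by
    apply snoc_mem u hetau
    · intro i; rw [hpu]; exact hxbu i
    · rw [hpu]; exact h4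
  have hmemu' : ExteriorAlgebra.ιMulti F (m + 1) (Fin.snoc x u') ∈ Wcirc F n (m + 1) := by
    apply snoc_mem u' hetau'
    · intro i; rw [hpu']; exact hxbu' i
    · rw [hpu']
      intro hmem
      have := zeta_span_left xb ub hxbu ub' hmem
      rw [h3] at this
      exact one_ne_zero this
  have hmemv1 : ExteriorAlgebra.ιMulti F (m + 1) (Fin.snoc x v1) ∈ Wcirc F n (m + 1) := by
    apply snoc_mem v1 hetav1
    · intro i
      rw [hpv1, zeta_add_right, hxbu i, hxbu' i, add_zero]
    · rw [hpv1]
      intro hmem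
      have := zeta_span_left xb ub hxbu (ub + ub') hmem
      rw [zeta_add_left, zeta_self, h3, zero_add] at this
      exact one_ne_zero this
  -- ι e = ι v1 + ι u + ι u'
  have hiota : ExteriorAlgebra.ι F (eVec F n)
      = ExteriorAlgebra.ι F v1 + ExteriorAlgebra.ι F u + ExteriorAlgebra.ι F u' := by
    rw [hv1d, map_add, map_add]
    have hstep : ExteriorAlgebra.ι F u + ExteriorAlgebra.ι F u' + ExteriorAlgebra.ι F (eVec F n)
        + ExteriorAlgebra.ι F u + ExteriorAlgebra.ι F u'
        = ExteriorAlgebra.ι F (eVec F n)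
          + (ExteriorAlgebra.ι F u + ExteriorAlgebra.ι F u)
          + (ExteriorAlgebra.ι F u' + ExteriorAlgebra.ι F u') := by abel
    rw [hstep, char2_add_self F, char2_add_self F, add_zero, add_zero]
  have heq : ExteriorAlgebra.ιMulti F (m + 1 - 1) x * ExteriorAlgebra.ι F (eVec F n)
      = ExteriorAlgebra.ιMulti F (m + 1) (Fin.snoc x v1)
        + ExteriorAlgebra.ιMulti F (m + 1) (Fin.snoc x u)
        + ExteriorAlgebra.ιMulti F (m + 1) (Fin.snoc x u') := by
    rw [hiota, mul_add, mul_add, ιMulti_snoc, ιMulti_snoc, ιMulti_snoc]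
    rfl
  rw [SetLike.mem_coe, heq]
  exact Submodule.add_mem _ (Submodule.add_mem _ hmemv1 hmemu) hmemu'

end Chunk5

end

noncomputable section
section Chunk6
variable {F : Type} [Field F] [CharP F 2] {n : ℕ}

lemma wcirc_le_sup {m : ℕ} :
    Wcirc F n (m + 1) ≤
      (Submodule.map (ExteriorAlgebra.map (incl F n)).toLinearMap (Wsp F n (m + 1)))
        ⊔ Nbar F n (m + 1) := by
  rw [Wcirc, Submodule.span_le]
  rintro _ ⟨v, hLI, hsing, rfl⟩
  set c : Fin (m + 1) → F := fun i => v i ⟨2 * n, by omega⟩ with hc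
  set f : Fin (m + 1) → (Fin (2 * n + 1) → F) := fun i => incl F n (proj F n (v i)) with hf
  have hv : v = fun i => f i + c i • eVec F n := by
    funext i; exact decomp (v i)
  have hexp : ExteriorAlgebra.ιMulti F (m + 1) v
      = ExteriorAlgebra.ιMulti F (m + 1) f
        + ∑ i, c i • ExteriorAlgebra.ιMulti F (m + 1) (Function.update f i (eVec F n)) := by
    conv_lhs => rw [hv]
    exact ιMulti_expand f c (eVec F n)
  rw [SetLike.mem_coe, hexp]
  apply Submodule.add_mem
  · apply Submodule.mem_sup_left
    refine Submodule.mem_map.2 ⟨ExteriorAlgebra.ιMulti F (m + 1) (proj F n ∘ v),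
      Submodule.subset_span ⟨proj F n ∘ v, li_proj v hsing hLI, iso_of_sing v hsing, rfl⟩, ?_⟩
    rw [AlgHom.toLinearMap_apply, ExteriorAlgebra.map_apply_ιMulti]
    rfl
  · apply Submodule.sum_mem
    intro i _
    apply Submodule.smul_mem
    apply Submodule.mem_sup_right
    have h5 : ExteriorAlgebra.ιMulti F (m + 1) (Function.update f i (eVec F n))
        = ExteriorAlgebra.ιMulti F m (f ∘ i.succAbove) * ExteriorAlgebra.ι F (eVec F n) :=
      ιMulti_update f i (eVec F n)
    have h6 : ExteriorAlgebra.ιMulti F m (v ∘ i.succAbove)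
        = ExteriorAlgebra.ιMulti F m (f ∘ i.succAbove)
          + ∑ j, (c ∘ i.succAbove) j •
              ExteriorAlgebra.ιMulti F m (Function.update (f ∘ i.succAbove) j (eVec F n)) := by
      have hvs : v ∘ i.succAbove
          = fun j => (f ∘ i.succAbove) j + (c ∘ i.succAbove) j • eVec F n := by
        funext j; exact congrFun hv (i.succAbove j)
      rw [hvs]
      exact ιMulti_expand _ _ _
    have h7 : ExteriorAlgebra.ιMulti F m (f ∘ i.succAbove) * ExteriorAlgebra.ι F (eVec F n)
        = ExteriorAlgebra.ιMulti F m (v ∘ i.succAbove) * ExteriorAlgebra.ι F (eVec F n) := by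
      rw [h6, add_mul, Finset.sum_mul, Finset.sum_eq_zero, add_zero]
      intro j _
      rw [smul_mul_assoc]
      have h8 : ExteriorAlgebra.ιMulti F m (Function.update (f ∘ i.succAbove) j (eVec F n))
            * ExteriorAlgebra.ι F (eVec F n)
          = ExteriorAlgebra.ιMulti F (m + 1)
              (Fin.snoc (Function.update (f ∘ i.succAbove) j (eVec F n)) (eVec F n)) :=
        (ιMulti_snoc _ _).symm
      have h9 : (Fin.snoc (Function.update (f ∘ i.succAbove) j (eVec F n)) (eVec F n) :
            Fin (m + 1) → (Fin (2 * n + 1) → F)) (Fin.castSucc j)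
          = (Fin.snoc (Function.update (f ∘ i.succAbove) j (eVec F n)) (eVec F n) :
            Fin (m + 1) → (Fin (2 * n + 1) → F)) (Fin.last m) := by
        rw [Fin.snoc_castSucc, Fin.snoc_last, Function.update_self]
      rw [h8, AlternatingMap.map_eq_zero_of_eq _ _ h9 (Fin.castSucc_lt_last j).ne, smul_zero]
    rw [h5, h7]
    apply Submodule.subset_span
    refine ⟨v ∘ i.succAbove, hLI.comp _ Fin.succAbove_right_injective, ?_, rfl⟩
    intro y hy
    exact hsing y (Submodule.span_mono (Set.range_comp_subset_range _ _) hy)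

/-- Let `F` be a perfect field with `char F = 2` and `2 ≤ k ≤ n`. Then
`(⋀^k π)(W_k°) = W̄^sp_k` and `{w ∈ W_k° : (⋀^k π)(w) = 0} = N̄_k`;
in particular `W_k°/N̄_k ≅ W̄^sp_k`. -/
theorem stmt8 (F : Type) [Field F] [CharP F 2] [PerfectField F] (n k : ℕ)
    (hk : 2 ≤ k) (hkn : k ≤ n) :
    Submodule.map (ExteriorAlgebra.map (proj F n)).toLinearMap (Wcirc F n k) = Wsp F n k ∧
    Wcirc F n k ⊓ LinearMap.ker (ExteriorAlgebra.map (proj F n)).toLinearMap = Nbar F n k := by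
  obtain ⟨m, rfl⟩ : ∃ m, k = m + 1 := ⟨k - 1, by omega⟩
  have hm : m < n := by omega
  constructor
  · exact le_antisymm wcirc_map_le wsp_le_map
  · apply le_antisymm
    · intro w hw
      obtain ⟨hwW, hwK⟩ := Submodule.mem_inf.1 hw
      have hsup := wcirc_le_sup hwW
      rw [Submodule.mem_sup] at hsup
      obtain ⟨s, hs, nb, hnb, rfl⟩ := hsup
      have hnbK : (ExteriorAlgebra.map (proj F n)).toLinearMap nb = 0 := nbar_le_ker hnb
      obtain ⟨t, htW, rfl⟩ := Submodule.mem_map.1 hs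
      have hret : ∀ z : ExteriorAlgebra F (Fin (2 * n) → F),
          ExteriorAlgebra.map (proj F n) (ExteriorAlgebra.map (incl F n) z) = z := by
        intro z
        have hcomp : (proj F n) ∘ₗ (incl F n) = LinearMap.id := LinearMap.ext proj_incl
        rw [← AlgHom.comp_apply, ExteriorAlgebra.map_comp_map, hcomp, ExteriorAlgebra.map_id]
        rfl
      rw [LinearMap.mem_ker, map_add, hnbK, add_zero] at hwK
      simp only [AlgHom.toLinearMap_apply] at hwK
      have ht0 : t = 0 := by rw [← hret t, hwK]
      rw [ht0]
      simpa using hnb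
    · exact le_inf (nbar_le_wcirc hm) nbar_le_ker
end Chunk6

end
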